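/- Let p > 3 be a prime and K a finite field with p² elements. Fix δ ∈ K with δ ≠ 0 and δ^p = −δ, let s ∈ K satisfy s^p = s, set C₂(s) = 9(1 + sδ), and let E_{2,s} : y² = x³ + 2(C₂(s) − 24)x − 8(C₂(s) − 16) over K. Fix i ∈ K with i² = −2, and for an affine point (x,y) with x ≠ 4 define ψ(x, y) = ( −x^p/2 − C₂(s)^p/(x^p − 4), (y^p/i)·(−1/2 + C₂(s)^p/(x^p − 4)²) ). Let ε = 1 if p ≡ 5 or 7 (mod 8) and ε = −1 if p ≡ 1 or 3 (mod 8). Then for every affine point P = (x, y) of E_{2,s}(K) with x ≠ 4 such that the x-coordinate of ψ(P) is also ≠ 4, one has ψ(ψ(P)) = [2ε]P in the group E_{2,s}(K). -/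

import Mathlib

lemma frob_fixed_mem {p : ℕ} [Fact p.Prime] {K : Type*} [Field K] [Fintype K] [CharP K p]
    {a : K} (ha : a ^ p = a) : ∃ z : ZMod p, ZMod.castHom (dvd_refl p) K z = a := by
  classical
  set f := ZMod.castHom (dvd_refl p) K with hf
  by_contra hcon
  push_neg at hcon
  set q : Polynomial K := Polynomial.X ^ p - Polynomial.X with hq
  have hp1 : 1 < p := (Fact.out : p.Prime).one_lt
  have hc : q.coeff p = 1 := by
    have h1 : p ≠ 1 := by omega
    simp [hq, Polynomial.coeff_X, h1, Ne.symm h1]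
  have hq0 : q ≠ 0 := fun h => by simp [h] at hc
  have hdeg : q.natDegree ≤ p :=
    le_trans (Polynomial.natDegree_sub_le _ _)
      (by rw [Polynomial.natDegree_X_pow, Polynomial.natDegree_X]; omega)
  have hroot : ∀ b : K, b ^ p = b → b ∈ q.roots.toFinset := by
    intro b hb
    rw [Multiset.mem_toFinset, Polynomial.mem_roots hq0, Polynomial.IsRoot.def, hq]
    simp only [Polynomial.eval_sub, Polynomial.eval_pow, Polynomial.eval_X]
    rw [hb]; ring
  set T : Finset K := Finset.image (fun z : ZMod p => f z) Finset.univ with hT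
  have hinj : Function.Injective (fun z : ZMod p => f z) := f.injective
  have hcardT : T.card = p := by
    rw [hT, Finset.card_image_of_injective _ hinj, Finset.card_univ, ZMod.card]
  have hTsub : T ⊆ q.roots.toFinset := by
    intro t ht
    rw [hT, Finset.mem_image] at ht
    obtain ⟨z, _, rfl⟩ := ht
    apply hroot
    rw [← map_pow, ZMod.pow_card]
  have haT : a ∉ T := by
    intro h
    rw [hT, Finset.mem_image] at h
    obtain ⟨z, _, hz⟩ := h
    exact hcon z hz
  have hsub : insert a T ⊆ q.roots.toFinset := by
    intro t ht
    rcases Finset.mem_insert.mp ht with h | ht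
    · exact h ▸ hroot a ha
    · exact hTsub ht
  have hcard : p + 1 ≤ q.roots.toFinset.card := by
    have := Finset.card_le_card hsub
    rwa [Finset.card_insert_of_notMem haT, hcardT] at this
  have : q.roots.toFinset.card ≤ p :=
    le_trans (Multiset.toFinset_card_le _) (le_trans (Polynomial.card_roots' q) hdeg)
  omega

open WeierstrassCurve.Affine in
lemma psi_core {F : Type*} [Field F] [DecidableEq F] (W : WeierstrassCurve.Affine F) (c x y u : F)
    (hW : W = { a₁ := 0, a₂ := 0, a₃ := 0, a₄ := 2 * (c - 24), a₆ := -8 * (c - 16) })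
    (h2 : (2 : F) ≠ 0) (h4 : (4 : F) ≠ 0) (hx4 : x - 4 ≠ 0) (hy : y ≠ 0)
    (heq : y ^ 2 = x ^ 3 + 2 * (c - 24) * x - 8 * (c - 16))
    (hu : u = -x / 2 - c / (x - 4)) (hu4 : u - 4 ≠ 0) :
    (-u / 2 - (18 - c) / (u - 4) = W.addX x x (W.slope x x y y)) ∧
      (y / 2 * (-1 / 2 + c / (x - 4) ^ 2) * (-1 / 2 + (18 - c) / (u - 4) ^ 2)
        = W.addY x x y (W.slope x x y y)) := by
  have h2y : 2 * y ≠ 0 := mul_ne_zero h2 hy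
  have hyne : y ≠ W.negY x y := by
    simp only [hW, WeierstrassCurve.Affine.negY]
    intro h
    exact h2y (by linear_combination h)
  have hL : W.slope x x y y = (3 * x ^ 2 + 2 * (c - 24)) / (2 * y) := by
    rw [W.slope_of_Y_ne rfl hyne]
    simp [hW, WeierstrassCurve.Affine.negY]
    ring
  have hu4' : u - 4 = -(x ^ 2 + 4 * x + 2 * c - 32) / (2 * (x - 4)) := by
    rw [hu]; field_simp; ring
  have hg : x ^ 2 + 4 * x + 2 * c - 32 ≠ 0 := by
    intro h
    apply hu4
    rw [hu4', h]
    simp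
  have hy2 : y ^ 2 = (x - 4) * (x ^ 2 + 4 * x + 2 * c - 32) := by linear_combination heq
  have hu4inv : (u - 4)⁻¹ = -(2 * (x - 4)) / (x ^ 2 + 4 * x + 2 * c - 32) := by
    rw [hu4', neg_div, inv_neg, inv_div]
    ring
  constructor
  · rw [div_eq_mul_inv (18 - c), hu4inv, hu, hL]
    simp only [hW, WeierstrassCurve.Affine.addX]
    rw [div_pow, mul_pow, hy2]
    have hg' : x * (x + 4) + 2 * c - 32 ≠ 0 := by convert hg using 1; ring
    field_simp
    ring
  · rw [show (18 - c) / (u - 4) ^ 2 = (18 - c) * ((u - 4)⁻¹) ^ 2 by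
      rw [div_eq_mul_inv, inv_pow], hu4inv, hL]
    simp only [hW, WeierstrassCurve.Affine.addY, WeierstrassCurve.Affine.negAddY,
      WeierstrassCurve.Affine.addX, WeierstrassCurve.Affine.negY]
    have hg' : x * (x + 4) + 2 * c - 32 ≠ 0 := by convert hg using 1; ring
    field_simp
    rw [show y ^ 4 = (y ^ 2) ^ 2 by ring, hy2]
    ring


lemma exists_some_eq {F : Type*} [Field F] {W : WeierstrassCurve.Affine F}
    {x₁ y₁ x₂ y₂ : F} (h : W.Nonsingular x₁ y₁) {Q : W.Point}
    (hQ : WeierstrassCurve.Affine.Point.some _ _ h = Q) (hx : x₂ = x₁) (hy : y₂ = y₁) :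
    ∃ h₂ : W.Nonsingular x₂ y₂, WeierstrassCurve.Affine.Point.some _ _ h₂ = Q := by
  subst hx hy; exact ⟨h, hQ⟩

open Classical in
/-- `ψ ∘ ψ = [2ε]` on affine points of `E_{2,s}(K)` (away from `x = 4`), where
`ε = 1` if `p ≡ 5, 7 (mod 8)` and `ε = −1` if `p ≡ 1, 3 (mod 8)`. -/
theorem degree2_endomorphism_squared
    (p : ℕ) (hp : p.Prime) (hp3 : 3 < p)
    (K : Type*) [Field K] [Fintype K] (hK : Fintype.card K = p ^ 2)
    (δ : K) (hδ : δ ≠ 0) (hδp : δ ^ p = -δ)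
    (s : K) (hs : s ^ p = s)
    (i : K) (hi : i ^ 2 = -2)
    (ε : ℤ) (hε : ε = if p % 8 = 5 ∨ p % 8 = 7 then 1 else -1)
    (W : WeierstrassCurve.Affine K)
    (hW : W = { a₁ := 0, a₂ := 0, a₃ := 0,
                a₄ := 2 * (9 * (1 + s * δ) - 24),
                a₆ := -8 * (9 * (1 + s * δ) - 16) })
    (x y : K) (hP : W.Nonsingular x y) (hx : x ≠ 4)
    (X Y : K)
    (hX : X = -x ^ p / 2 - (9 * (1 + s * δ)) ^ p / (x ^ p - 4))
    (hY : Y = y ^ p / i * (-1 / 2 + (9 * (1 + s * δ)) ^ p / (x ^ p - 4) ^ 2))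
    (hX4 : X ≠ 4)
    (X₂ Y₂ : K)
    (hX₂ : X₂ = -X ^ p / 2 - (9 * (1 + s * δ)) ^ p / (X ^ p - 4))
    (hY₂ : Y₂ = Y ^ p / i * (-1 / 2 + (9 * (1 + s * δ)) ^ p / (X ^ p - 4) ^ 2)) :
    ∃ h₂ : W.Nonsingular X₂ Y₂,
      WeierstrassCurve.Affine.Point.some _ _ h₂ =
        (2 * ε) • WeierstrassCurve.Affine.Point.some _ _ hP := by
  haveI : Fact p.Prime := ⟨hp⟩
  -- characteristic
  obtain ⟨q, hq⟩ := CharP.exists K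
  haveI := hq
  have hqp : q = p := by
    have hqprime : q.Prime := CharP.char_is_prime K q
    have : (↑(p ^ 2) : K) = 0 := by rw [← hK]; exact FiniteField.cast_card_eq_zero K
    have hdvd : q ∣ p ^ 2 := (CharP.cast_eq_zero_iff K q _).mp this
    have := hqprime.dvd_of_dvd_pow hdvd
    exact ((Nat.prime_dvd_prime_iff_eq hqprime hp).mp this)
  haveI : CharP K p := hqp ▸ hq
  -- basic nonzero facts
  have hp2 : p ≠ 2 := by omega
  have h2 : (2 : K) ≠ 0 := by
    intro h
    have : (p : ℕ) ∣ 2 := (CharP.cast_eq_zero_iff K p 2).mp (by exact_mod_cast h)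
    have := Nat.le_of_dvd (by norm_num) this
    omega
  have h4 : (4 : K) ≠ 0 := by
    intro h
    have hdvd : (p : ℕ) ∣ 4 := (CharP.cast_eq_zero_iff K p 4).mp (by exact_mod_cast h)
    have hle := Nat.le_of_dvd (by norm_num) hdvd
    have hp4 : p = 4 := by omega
    rw [hp4] at hp
    norm_num at hp
  -- Frobenius
  set φ := frobenius K p with hφdef
  have hφ : ∀ a : K, φ a = a ^ p := fun a => rfl
  have hF2 : ∀ a : K, (a ^ p) ^ p = a := by
    intro a
    rw [← pow_mul, show p * p = p ^ 2 by ring, ← hK, FiniteField.pow_card]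
  have hpow_sub : ∀ a b : K, (a - b) ^ p = a ^ p - b ^ p := fun a b => map_sub φ a b
  have hpow_add : ∀ a b : K, (a + b) ^ p = a ^ p + b ^ p := fun a b => map_add φ a b
  have hpow_mul : ∀ a b : K, (a * b) ^ p = a ^ p * b ^ p := fun a b => map_mul φ a b
  have hpow_div : ∀ a b : K, (a / b) ^ p = a ^ p / b ^ p := fun a b => map_div₀ φ a b
  have hpow_neg : ∀ a : K, (-a) ^ p = -(a ^ p) := fun a => map_neg φ a
  have hone_p : (1 : K) ^ p = 1 := one_pow p
  have h2p : (2 : K) ^ p = 2 := map_ofNat φ 2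
  have h4p : (4 : K) ^ p = 4 := map_ofNat φ 4
  have h9p : (9 : K) ^ p = 9 := map_ofNat φ 9
  have h18p : (18 : K) ^ p = 18 := map_ofNat φ 18
  have h32p : (32 : K) ^ p = 32 := map_ofNat φ 32
  have hsq2 : ∀ a : K, (a ^ 2) ^ p = (a ^ p) ^ 2 := fun a => by
    rw [← pow_mul, mul_comm, pow_mul]
  set c : K := 9 * (1 + s * δ) with hc
  have hCp : c ^ p = 18 - c := by
    rw [hc, hpow_mul, hpow_add, hone_p, hpow_mul, h9p, hs, hδp]
    ring
  have h18c : (18 - c : K) ^ p = c := by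
    rw [hpow_sub, h18p, hCp]; ring
  -- curve equation
  have heq : y ^ 2 = x ^ 3 + 2 * (c - 24) * x - 8 * (c - 16) := by
    have h := (W.equation_iff x y).mp hP.1
    rw [hW] at h
    simp only [] at h
    linear_combination h
  have hx4 : x - 4 ≠ 0 := sub_ne_zero.mpr hx
  have hxp4 : x ^ p - 4 ≠ 0 := by
    intro h
    apply hx
    have h' : x ^ p = 4 := by linear_combination h
    have := congrArg (fun t : K => t ^ p) h'
    simp only [hF2] at this
    rw [this, ← hφ 4, map_ofNat]
  have hXp4 : X ^ p - 4 ≠ 0 := by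
    intro h
    apply hX4
    have h' : X ^ p = 4 := by linear_combination h
    have := congrArg (fun t : K => t ^ p) h'
    simp only [hF2] at this
    rw [this, ← hφ 4, map_ofNat]
  -- y ≠ 0
  have hy0 : y ≠ 0 := by
    intro h0
    rw [h0] at heq
    have h' : (x - 4) * (x ^ 2 + 4 * x + 2 * c - 32) = 0 := by linear_combination -heq
    have hg0 : x ^ 2 + 4 * x + 2 * c - 32 = 0 := by
      rcases mul_eq_zero.mp h' with h4' | hgg
      · exact absurd (by linear_combination h4' : x = (4:K)) hx
      · exact hgg
    apply hX4
    have hgp : (x ^ p) ^ 2 + 4 * (x ^ p) + 2 * (18 - c) - 32 = 0 := by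
      have h2' := congrArg (fun t : K => t ^ p) hg0
      simp only [hpow_sub, hpow_add, hpow_mul, hsq2, h2p, h4p, h32p, hone_p, h9p,
        hs, hδp, hCp] at h2'
      rw [zero_pow hp.ne_zero] at h2'
      rw [hc]
      linear_combination h2'
    have hXeq : X - 4 = -((x ^ p) ^ 2 + 4 * (x ^ p) + 2 * (18 - c) - 32) / (2 * (x ^ p - 4)) := by
      rw [hX, hCp]
      field_simp
      ring
    have hX40 : X - 4 = 0 := by rw [hXeq, hgp]; simp
    linear_combination hX40
  -- Frobenius of X and Y
  have hXfr : X ^ p = -x / 2 - c / (x - 4) := by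
    rw [hX, hCp]
    simp only [hpow_sub, hpow_add, hpow_mul, hpow_div, hpow_neg, hone_p, h2p, h4p, h9p,
      h18p, hF2, hs, hδp, hCp]
    rw [hc]; ring
  have hYfr : Y ^ p = y / i ^ p * (-1 / 2 + c / (x - 4) ^ 2) := by
    rw [hY, hCp]
    simp only [hsq2, hpow_sub, hpow_add, hpow_mul, hpow_div, hpow_neg, hone_p, h2p, h4p,
      h9p, h18p, hF2, hs, hδp, hCp]
    rw [hc]; ring
  -- i facts
  have hi0 : i ≠ 0 := by
    intro h
    rw [h] at hi
    exact h2 (by linear_combination hi)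
  have hneg2p : (-2 : K) ^ p = -2 := by
    rw [← hφ, map_neg, map_ofNat]
  have hii : i ^ p = i ∨ i ^ p = -i := by
    have hsq : (i ^ p) ^ 2 = i ^ 2 := by
      rw [← pow_mul, mul_comm, pow_mul, hi, hneg2p]
    have hfac : (i ^ p - i) * (i ^ p + i) = 0 := by linear_combination hsq
    rcases mul_eq_zero.mp hfac with h | h
    · exact Or.inl (by linear_combination h)
    · exact Or.inr (by linear_combination h)
  set f := ZMod.castHom (dvd_refl p) K with hfdef
  -- the two identities from psi_core, with u := X ^ p
  obtain ⟨hE1, hE2⟩ := psi_core W c x y (X ^ p) hW h2 h4 hx4 hy0 heq hXfr hXp4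
  set L := W.slope x x y y with hL
  have hyne : y ≠ W.negY x y := by
    rw [hW]
    simp only [WeierstrassCurve.Affine.negY]
    intro h
    exact hy0 (by
      have h2y : 2 * y = 0 := by linear_combination h
      rcases mul_eq_zero.mp h2y with h' | h'
      · exact absurd h' h2
      · exact h')
  have hXval : X₂ = W.addX x x L := by rw [hX₂, hCp, ← hE1]
  have haddP := WeierstrassCurve.Affine.Point.add_self_of_Y_ne (h₁ := hP) hyne
  -- case split on ε
  by_cases hcase : p % 8 = 5 ∨ p % 8 = 7
  · -- ε = 1, i^p = -i
    have hε1 : ε = 1 := by rw [hε, if_pos hcase]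
    subst hε1
    have hipneg : i ^ p = -i := by
      rcases hii with h | h
      · exfalso
        obtain ⟨z, hz⟩ := frob_fixed_mem h
        have hzz : z * z = -2 := by
          apply f.injective
          rw [map_mul, hz, map_neg, map_ofNat]
          linear_combination hi
        have : IsSquare (-2 : ZMod p) := ⟨z, hzz.symm⟩
        have := (ZMod.exists_sq_eq_neg_two_iff hp2).mp this
        omega
      · exact h
    have hsc : y / (-i) / i = y / 2 := by
      rw [div_div, neg_mul, show (i * i : K) = -2 by linear_combination hi, neg_neg]
    have hYval : Y₂ = W.addY x x y L := by
      rw [hY₂, hCp, hYfr, hipneg, ← hE2]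
      trans (y / (-i) / i * (-1 / 2 + c / (x - 4) ^ 2) * (-1 / 2 + (18 - c) / (X ^ p - 4) ^ 2))
      · ring
      · rw [hsc]
    refine exists_some_eq (W.nonsingular_add hP hP fun h => hyne h.2) ?_ hXval hYval
    rw [← haddP]
    have : ((2 : ℤ) * 1) • WeierstrassCurve.Affine.Point.some _ _ hP =
        WeierstrassCurve.Affine.Point.some _ _ hP + WeierstrassCurve.Affine.Point.some _ _ hP := by
      rw [mul_one, two_zsmul]
    rw [this]
  · -- ε = -1, i^p = i
    have hε1 : ε = -1 := by rw [hε, if_neg hcase]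
    subst hε1
    have hmod : p % 8 = 1 ∨ p % 8 = 3 := by
      push_neg at hcase
      rcases hp.eq_two_or_odd with h | h
      · omega
      · omega
    obtain ⟨z, hz⟩ := (ZMod.exists_sq_eq_neg_two_iff hp2).mpr hmod
    set w := f z with hw
    have hw2 : w ^ 2 = -2 := by
      rw [hw, ← map_pow, show z ^ 2 = -2 by rw [pow_two]; exact hz.symm, map_neg, map_ofNat]
    have hwp : w ^ p = w := by rw [hw, ← map_pow, ZMod.pow_card]
    have hiw : i = w ∨ i = -w := by
      have hfac : (i - w) * (i + w) = 0 := by linear_combination hi - hw2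
      rcases mul_eq_zero.mp hfac with h | h
      · exact Or.inl (by linear_combination h)
      · exact Or.inr (by linear_combination h)
    have hip : i ^ p = i := by
      rcases hiw with h | h
      · rw [h, hwp]
      · rw [h, hpow_neg, hwp]
    have hsc : y / i / i = -(y / 2) := by
      rw [div_div, show (i * i : K) = -2 by linear_combination hi, div_neg]
    have hYval : Y₂ = -(W.addY x x y L) := by
      rw [hY₂, hCp, hYfr, hip, ← hE2]
      trans (y / i / i * (-1 / 2 + c / (x - 4) ^ 2) * (-1 / 2 + (18 - c) / (X ^ p - 4) ^ 2))
      · ring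
      · rw [hsc]; ring
    have hneg : -(W.addY x x y L) = W.negY (W.addX x x L) (W.addY x x y L) := by
      rw [hW]
      simp [WeierstrassCurve.Affine.negY]
    refine exists_some_eq
      ((W.nonsingular_neg _ _).mpr (W.nonsingular_add hP hP fun h => hyne h.2)) ?_ hXval
      (hYval.trans hneg)
    rw [← WeierstrassCurve.Affine.Point.neg_some (W.nonsingular_add hP hP fun h => hyne h.2), ← haddP]
    have h2e : ((2 : ℤ) * -1) • WeierstrassCurve.Affine.Point.some _ _ hP =
        -(WeierstrassCurve.Affine.Point.some _ _ hP + WeierstrassCurve.Affine.Point.some _ _ hP) := by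
      rw [show ((2 : ℤ) * -1) = -2 by norm_num, neg_zsmul, two_zsmul]
    rw [h2e]
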